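/- Let Q be a quiver, d a dimension vector, μ_{Q,d} : R(Q̄,d) → gl(d) the moment map, X(Q,d) = μ_{Q,d}^{-1}(0), and π_m : X(Q,d)_m → X(Q,d) the truncation map from the m-jet scheme. Then the fiber π_m^{-1}(0) over the origin is isomorphic to R(Q̄,d) × X(Q,d)_{m−2} for m ≥ 2, and to R(Q̄,d) for m = 1. -/

import Mathlib

open Finset

lemma sum_antidiag_shift {M : Type*} [AddCommMonoid M] (k : ℕ) (f : ℕ × ℕ → M)
    (h1 : ∀ q, f (0, q) = 0) (h2 : ∀ p, f (p, 0) = 0) :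
    ∑ pq ∈ Finset.HasAntidiagonal.antidiagonal (k + 2), f pq
      = ∑ pq ∈ Finset.HasAntidiagonal.antidiagonal k, f (pq.1 + 1, pq.2 + 1) := by
  rw [Finset.Nat.antidiagonal_succ_succ', Finset.sum_cons, Finset.sum_cons, Finset.sum_map]
  simp only [h1, h2, zero_add, add_zero]
  exact Finset.sum_congr rfl fun pq _ => rfl

section QuiverMomentMap

variable {V A : Type} [Fintype V] [Fintype A] [DecidableEq V]
  (src tgt : A → V) (d : V → ℕ)

/-- Source map of the doubled quiver `Q̄` (arrows `A ⊕ A`, the second copy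
consisting of the reversed arrows `a*`). -/
abbrev dsrc : A ⊕ A → V := fun a => Sum.rec (fun a => src a) (fun a => tgt a) a

/-- Target map of the doubled quiver `Q̄`. -/
abbrev dtgt : A ⊕ A → V := fun a => Sum.rec (fun a => tgt a) (fun a => src a) a

/-- The representation space `R(Q̄,d)` of the doubled quiver over a
commutative ring `R`. -/
abbrev RepSpace (R : Type) [CommRing R] : Type :=
  ∀ a : A ⊕ A, Matrix (Fin (d (dtgt src tgt a))) (Fin (d (dsrc src tgt a))) R

/-- Transport of a square matrix along an equality of sizes. -/
def castSq {R : Type} [CommRing R] {n n' : ℕ} (h : n = n')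
    (M : Matrix (Fin n) (Fin n) R) : Matrix (Fin n') (Fin n') R :=
  M.submatrix (Fin.cast h.symm) (Fin.cast h.symm)

/-- The bilinear version of the moment map of `Q`: its `i`-th component on a
pair `(w, w')` of points of `R(Q̄,d)` is
`∑_{a : t(a) = i} w_a w'_{a*} − ∑_{a : s(a) = i} w_{a*} w'_a`;
the moment map itself is `μ_{Q,d}(w) = momentBil w w`. -/
def momentBil {R : Type} [CommRing R] (w w' : RepSpace src tgt d R) (i : V) :
    Matrix (Fin (d i)) (Fin (d i)) R :=
  (∑ a : A, if h : tgt a = i then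
      castSq (congrArg d h) ((w (Sum.inl a) : Matrix (Fin (d (tgt a))) (Fin (d (src a))) R)
        * (w' (Sum.inr a) : Matrix (Fin (d (src a))) (Fin (d (tgt a))) R)) else 0)
  - ∑ a : A, if h : src a = i then
      castSq (congrArg d h) ((w (Sum.inr a) : Matrix (Fin (d (src a))) (Fin (d (tgt a))) R)
        * (w' (Sum.inl a) : Matrix (Fin (d (tgt a))) (Fin (d (src a))) R)) else 0

/-- The moment map `μ_{Q,d} : R(Q̄,d) → gl(d)`. -/
def momentMap {R : Type} [CommRing R] (w : RepSpace src tgt d R) (i : V) :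
    Matrix (Fin (d i)) (Fin (d i)) R :=
  momentBil src tgt d w w i

set_option linter.unusedSectionVars false in
lemma momentBil_zero_left {R : Type} [CommRing R] (w : RepSpace src tgt d R) (i : V) :
    momentBil src tgt d 0 w i = 0 := by
  simp [momentBil, castSq]

set_option linter.unusedSectionVars false in
lemma momentBil_zero_right {R : Type} [CommRing R] (w : RepSpace src tgt d R) (i : V) :
    momentBil src tgt d w 0 i = 0 := by
  simp [momentBil, castSq]

variable (K : Type) [Field K]

/-- The `m`-jet space `X(Q,d)_m` of `X(Q,d) = μ_{Q,d}^{-1}(0)`, modelled as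
truncated Taylor coefficients: a jet is `γ(t) = γ₀ + γ₁ t + ⋯ + γ_m t^m` with
coefficients in `R(Q̄,d)` such that `μ_{Q,d}(γ(t)) ≡ 0 mod t^{m+1}`, i.e. for
every `k ≤ m` the `t^k`-coefficient `∑_{p+q=k} B(γ_p, γ_q)` of the quadratic
map `μ` vanishes, where `B` is its bilinearization. -/
abbrev JetSpace (m : ℕ) : Type :=
  { γ : ℕ → RepSpace src tgt d K //
      (∀ k, m < k → γ k = 0) ∧
      ∀ k ≤ m, ∀ i : V,
        ∑ pq ∈ Finset.HasAntidiagonal.antidiagonal k, momentBil src tgt d (γ pq.1) (γ pq.2) i = 0 }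

/-- **Lemma 3.5 (fibers of the jet truncation over the origin).**
Let `π_m : X(Q,d)_m → X(Q,d)` be the truncation map of the `m`-jet space of
the zero fiber of the moment map of `Q`.  Then `π_m^{-1}(0) ≅ R(Q̄,d) × X(Q,d)_{m-2}`
for `m ≥ 2`, and `π_1^{-1}(0) ≅ R(Q̄,d)`. -/
theorem stmt_10 :
    (∀ m : ℕ, 2 ≤ m →
      Nonempty (({ γ : JetSpace src tgt d K m // γ.1 0 = 0 })
        ≃ (RepSpace src tgt d K) × JetSpace src tgt d K (m - 2)))
    ∧ Nonempty (({ γ : JetSpace src tgt d K 1 // γ.1 0 = 0 })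
        ≃ RepSpace src tgt d K) := by
  constructor
  · intro m hm
    obtain ⟨n, rfl⟩ : ∃ n, m = n + 2 := ⟨m - 2, by omega⟩
    have hsub : n + 2 - 2 = n := rfl
    refine ⟨{
      toFun := fun γ => ⟨γ.1.1 (n + 2),
        ⟨fun j => if n < j then 0 else γ.1.1 (j + 1), ?_, ?_⟩⟩
      invFun := fun xδ => ⟨⟨fun k =>
          if k = 0 then 0 else if k = n + 2 then xδ.1 else xδ.2.1 (k - 1), ?_, ?_⟩, by simp⟩
      left_inv := ?_
      right_inv := ?_ }⟩
    · intro k hk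
      have h : n < k := by omega
      simp [h]
    · -- equations for δ
      intro k hk i
      have h0 := γ.2
      have key : (∑ pq ∈ Finset.HasAntidiagonal.antidiagonal k,
          momentBil src tgt d
            ((fun j => if n < j then 0 else γ.1.1 (j + 1)) pq.1)
            ((fun j => if n < j then 0 else γ.1.1 (j + 1)) pq.2) i)
          = ∑ pq ∈ Finset.HasAntidiagonal.antidiagonal k,
            momentBil src tgt d (γ.1.1 (pq.1 + 1)) (γ.1.1 (pq.2 + 1)) i := by
        refine Finset.sum_congr rfl fun pq hpq => ?_
        have hmem := Finset.HasAntidiagonal.mem_antidiagonal.mp hpq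
        have h1 : ¬ n < pq.1 := by omega
        have h2 : ¬ n < pq.2 := by omega
        simp [h1, h2]
      rw [key, ← sum_antidiag_shift k
        (fun pq => momentBil src tgt d (γ.1.1 pq.1) (γ.1.1 pq.2) i)
        (fun q => by
          show momentBil src tgt d (γ.1.1 0) (γ.1.1 q) i = 0
          rw [γ.2, momentBil_zero_left])
        (fun p => by
          show momentBil src tgt d (γ.1.1 p) (γ.1.1 0) i = 0
          rw [γ.2, momentBil_zero_right])]
      exact γ.1.2.2 (k + 2) (by omega) i
    · -- vanishing above degree for invFun
      intro k hk
      have h1 : k ≠ 0 := by omega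
      have h2 : k ≠ n + 2 := by omega
      simp only [h1, h2, if_false]
      exact xδ.2.2.1 (k - 1) (by omega)

    · -- equations for invFun
      intro k hk i
      match k with
      | 0 => simp [momentBil_zero_left]
      | 1 =>
        rw [show (1 : ℕ) = 0 + 1 from rfl, Finset.Nat.antidiagonal_succ,
          Finset.sum_cons]
        simp [momentBil_zero_left, momentBil_zero_right]
      | (k' + 2) =>
        rw [sum_antidiag_shift k'
          (fun pq => momentBil src tgt d
            ((fun k => if k = 0 then 0 else if k = n + 2 then xδ.1 else xδ.2.1 (k - 1)) pq.1)
            ((fun k => if k = 0 then 0 else if k = n + 2 then xδ.1 else xδ.2.1 (k - 1)) pq.2) i)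
          (fun q => by simp [momentBil_zero_left])
          (fun p => by simp [momentBil_zero_right])]
        have key : ∀ pq ∈ Finset.HasAntidiagonal.antidiagonal k',
            momentBil src tgt d
              (if pq.1 + 1 = 0 then 0 else if pq.1 + 1 = n + 2 then xδ.1 else xδ.2.1 (pq.1 + 1 - 1))
              (if pq.2 + 1 = 0 then 0 else if pq.2 + 1 = n + 2 then xδ.1 else xδ.2.1 (pq.2 + 1 - 1)) i
            = momentBil src tgt d (xδ.2.1 pq.1) (xδ.2.1 pq.2) i := by
          intro pq hpq
          have hmem := Finset.HasAntidiagonal.mem_antidiagonal.mp hpq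
          have h1 : pq.1 + 1 ≠ n + 2 := by omega
          have h2 : pq.2 + 1 ≠ n + 2 := by omega
          simp [h1, h2, show pq.1 ≠ n + 1 by omega, show pq.2 ≠ n + 1 by omega]
        rw [Finset.sum_congr rfl key]
        exact xδ.2.2.2 k' (by omega) i
    · -- left inverse
      intro γ
      apply Subtype.ext
      apply Subtype.ext
      funext k
      by_cases h0 : k = 0
      · subst h0; simp [γ.2]
      by_cases h2 : k = n + 2
      · subst h2; simp
      simp only [h0, h2, if_false]
      by_cases h3 : n < k - 1
      · have hz : γ.1.1 k = 0 := γ.1.2.1 k (by omega)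
        rw [if_pos h3, hz]
      · rw [if_neg h3]
        have he : k - 1 + 1 = k := by omega
        rw [he]
    · -- right inverse
      intro xδ
      refine Prod.ext (by simp) ?_
      apply Subtype.ext
      funext j
      by_cases hj : n < j
      · simp only [if_pos hj]
        exact (xδ.2.2.1 j hj).symm
      · have h1 : j + 1 ≠ 0 := by omega
        have h2 : j + 1 ≠ n + 2 := by omega
        simp [hj, h1, h2, show j ≠ n + 1 by omega]
  · refine ⟨{
      toFun := fun γ => γ.1.1 1
      invFun := fun x => ⟨⟨fun k => if k = 1 then x else 0, ?_, ?_⟩, by simp⟩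
      left_inv := ?_
      right_inv := fun x => by simp }⟩
    · intro k hk; simp [show k ≠ 1 by omega]
    · intro k hk i
      match k with
      | 0 => simp [momentBil_zero_left]
      | 1 =>
        rw [show (1 : ℕ) = 0 + 1 from rfl, Finset.Nat.antidiagonal_succ, Finset.sum_cons]
        simp [momentBil_zero_left, momentBil_zero_right]
    · intro γ
      apply Subtype.ext
      apply Subtype.ext
      funext k
      match k with
      | 0 => simp [γ.2]
      | 1 => simp
      | (k + 2) =>
        simp only [show k + 2 ≠ 1 by omega, if_false]
        exact (γ.1.2.1 (k + 2) (by omega)).symm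

end QuiverMomentMap
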